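/- Let 𝒞 be an additive category, ℱ, 𝒢 additive endofunctors, and bar an additive endofunctor that is the identity on objects and an involution on morphisms. Let f : ℱ → 𝒢 be a natural transformation, and let ∂ : Hom(A,B) → Hom(𝒢A, ℱB) satisfy: (1) ∂ is ℤ-linear; (2) 𝒢(φ − φ̄) = f_B ∘ ∂φ and ℱ(φ − φ̄) = ∂φ ∘ f_A; (3) ∂(ψ∘φ) = ∂ψ ∘ 𝒢φ + ℱψ̄ ∘ ∂φ = ∂ψ ∘ 𝒢φ̄ + ℱψ ∘ ∂φ. Then for any bounded chain complex C over 𝒞 with differential d, the mapping cones Cone(f_C : ℱC → 𝒢C) and Cone(f_{C̄} : ℱC̄ → 𝒢C̄) are isomorphic as chain complexes, where C̄ is C with differential d̄. -/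

import Mathlib

open CategoryTheory CategoryTheory.Limits

namespace Stmt9

variable {𝒞 : Type*} [Category 𝒞] [Preadditive 𝒞] [HasBinaryBiproducts 𝒞]

/-- Given an operation `bar` on morphisms which is additive and compatible with
composition, the complex `C̄` obtained from `C` by applying `bar` to its differential. -/
def barComplex (bar : ∀ {A B : 𝒞}, (A ⟶ B) → (A ⟶ B))
    (hadd : ∀ {A B : 𝒞} (φ ψ : A ⟶ B), bar (φ + ψ) = bar φ + bar ψ)
    (hcomp : ∀ {A B D : 𝒞} (φ : A ⟶ B) (ψ : B ⟶ D), bar (φ ≫ ψ) = bar φ ≫ bar ψ)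
    (C : CochainComplex 𝒞 ℤ) : CochainComplex 𝒞 ℤ where
  X := C.X
  d i j := bar (C.d i j)
  shape i j hij := by
    have h0 : bar (0 : C.X i ⟶ C.X j) = 0 := by
      have := hadd (0 : C.X i ⟶ C.X j) 0
      simp only [add_zero] at this
      exact (left_eq_add.mp this)
    try dsimp only
    rw [C.shape i j hij, h0]
  d_comp_d' i j k _ _ := by
    try dsimp only
    rw [← hcomp, C.d_comp_d]
    have := hadd (0 : C.X i ⟶ C.X k) 0
    simp only [add_zero] at this
    exact (left_eq_add.mp this)

section
open CochainComplex

theorem cone_iso_aux {K₁ L₁ K₂ L₂ : CochainComplex 𝒞 ℤ} (φ₁ : K₁ ⟶ L₁) (φ₂ : K₂ ⟶ L₂)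
    [HomologicalComplex.HasHomotopyCofiber φ₁] [HomologicalComplex.HasHomotopyCofiber φ₂]
    (a : ∀ k, K₁.X k ⟶ K₂.X k) (a' : ∀ k, K₂.X k ⟶ K₁.X k)
    (b : ∀ k, L₁.X k ⟶ L₂.X k) (b' : ∀ k, L₂.X k ⟶ L₁.X k)
    (haa' : ∀ k, a k ≫ a' k = 𝟙 _) (ha'a : ∀ k, a' k ≫ a k = 𝟙 _)
    (hbb' : ∀ k, b k ≫ b' k = 𝟙 _) (hb'b : ∀ k, b' k ≫ b k = 𝟙 _)
    (h : ∀ k, L₁.X k ⟶ K₂.X (k + 1))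
    (hKK : ∀ k, K₁.d k (k + 1) ≫ a (k + 1) = a k ≫ K₂.d k (k + 1) + φ₁.f k ≫ h k)
    (hKL : ∀ k, L₁.d k (k + 1) ≫ h (k + 1) = -(h k ≫ K₂.d (k + 1) (k + 1 + 1)))
    (hLK : ∀ k, φ₁.f k ≫ b k = a k ≫ φ₂.f k)
    (hLL : ∀ k, L₁.d k (k + 1) ≫ b (k + 1) = b k ≫ L₂.d k (k + 1) + h k ≫ φ₂.f (k + 1)) :
    Nonempty (mappingCone φ₁ ≅ mappingCone φ₂) := by
  let θ : ∀ n : ℤ, (mappingCone φ₁).X n ⟶ (mappingCone φ₂).X n := fun n =>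
    (mappingCone.fst φ₁).1.v n (n + 1) rfl ≫ a (n + 1) ≫
        (mappingCone.inl φ₂).v (n + 1) n (by omega) +
      (mappingCone.snd φ₁).v n n (add_zero n) ≫
        (h n ≫ (mappingCone.inl φ₂).v (n + 1) n (by omega) + b n ≫ (mappingCone.inr φ₂).f n)
  let θ' : ∀ n : ℤ, (mappingCone φ₂).X n ⟶ (mappingCone φ₁).X n := fun n =>
    (mappingCone.fst φ₂).1.v n (n + 1) rfl ≫ a' (n + 1) ≫
        (mappingCone.inl φ₁).v (n + 1) n (by omega) +
      (mappingCone.snd φ₂).v n n (add_zero n) ≫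
        (-(b' n ≫ h n ≫ a' (n + 1) ≫ (mappingCone.inl φ₁).v (n + 1) n (by omega)) +
          b' n ≫ (mappingCone.inr φ₁).f n)
  have h1 : ∀ n : ℤ, (mappingCone.inl φ₁).v (n + 1) n (by omega) ≫ θ n =
      a (n + 1) ≫ (mappingCone.inl φ₂).v (n + 1) n (by omega) := by
    intro n
    simp [θ]
  have h2 : ∀ n : ℤ, (mappingCone.inr φ₁).f n ≫ θ n =
      h n ≫ (mappingCone.inl φ₂).v (n + 1) n (by omega) + b n ≫ (mappingCone.inr φ₂).f n := by
    intro n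
    simp [θ]
  have h1' : ∀ n : ℤ, (mappingCone.inl φ₂).v (n + 1) n (by omega) ≫ θ' n =
      a' (n + 1) ≫ (mappingCone.inl φ₁).v (n + 1) n (by omega) := by
    intro n
    simp [θ']
  have h2' : ∀ n : ℤ, (mappingCone.inr φ₂).f n ≫ θ' n =
      -(b' n ≫ h n ≫ a' (n + 1) ≫ (mappingCone.inl φ₁).v (n + 1) n (by omega)) +
        b' n ≫ (mappingCone.inr φ₁).f n := by
    intro n
    simp [θ']
  have hcomm : ∀ n : ℤ,
      θ n ≫ (mappingCone φ₂).d n (n + 1) = (mappingCone φ₁).d n (n + 1) ≫ θ (n + 1) := by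
    intro n
    rw [mappingCone.ext_from_iff φ₁ (n + 1) n rfl]
    constructor
    · rw [reassoc_of% (h1 n),
        mappingCone.inl_v_d_assoc φ₁ (n + 1) n (n + 1 + 1) (by omega) (by omega),
        mappingCone.inl_v_d φ₂ (n + 1) n (n + 1 + 1) (by omega) (by omega)]
      simp only [Preadditive.sub_comp, Preadditive.comp_sub, Category.assoc, h1, h2,
        Preadditive.comp_add]
      simp only [← Category.assoc, hKK (n + 1), ← hLK (n + 1)]
      simp only [Preadditive.add_comp, Category.assoc]
      abel
    · rw [reassoc_of% (h2 n), mappingCone.inr_f_d_assoc, h2 (n + 1)]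
      simp only [Preadditive.add_comp, Category.assoc,
        mappingCone.inl_v_d φ₂ (n + 1) n (n + 1 + 1) (by omega) (by omega),
        mappingCone.inr_f_d, Preadditive.comp_add, Preadditive.comp_sub]
      simp only [← Category.assoc, hKL n, hLL n]
      simp only [Preadditive.add_comp, Preadditive.neg_comp, Category.assoc]
      abel
  have hθθ' : ∀ n : ℤ, θ n ≫ θ' n = 𝟙 _ := by
    intro n
    rw [mappingCone.ext_from_iff φ₁ (n + 1) n rfl]
    constructor
    · rw [reassoc_of% (h1 n), h1' n, reassoc_of% (haa' (n + 1)), Category.comp_id]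
    · rw [reassoc_of% (h2 n)]
      simp only [Preadditive.add_comp, Category.assoc, h1', h2', Preadditive.comp_add,
        Preadditive.comp_neg, reassoc_of% (hbb' n), Category.comp_id]
      abel
  have hθ'θ : ∀ n : ℤ, θ' n ≫ θ n = 𝟙 _ := by
    intro n
    rw [mappingCone.ext_from_iff φ₂ (n + 1) n rfl]
    constructor
    · rw [reassoc_of% (h1' n), h1 n, reassoc_of% (ha'a (n + 1)), Category.comp_id]
    · rw [reassoc_of% (h2' n)]
      simp only [Preadditive.add_comp, Preadditive.neg_comp, Category.assoc, h1, h2,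
        Preadditive.comp_add, reassoc_of% (ha'a (n + 1)), reassoc_of% (hb'b n),
        Category.comp_id]
      abel
  exact ⟨HomologicalComplex.Hom.isoOfComponents (fun n => ⟨θ n, θ' n, hθθ' n, hθ'θ n⟩)
    (by rintro i j rfl; exact hcomm i)⟩

end

set_option maxHeartbeats 2000000 in
/-- The mapping cone lemma: if `𝒞` is an additive category, `ℱ`, `𝒢` additive
endofunctors, `bar` an additive endofunctor which is the identity on objects and an
involution on morphisms, `f : ℱ → 𝒢` a natural transformation, and
`∂ : Hom(A,B) → Hom(𝒢A, ℱB)` a ℤ-linear operation satisfying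
`𝒢(φ - φ̄) = f_B ∘ ∂φ`, `ℱ(φ - φ̄) = ∂φ ∘ f_A` and the perturbed Leibniz rule, then
for any bounded cochain complex `C` the mapping cones of `f_C : ℱC → 𝒢C` and of
`f_C̄ : ℱC̄ → 𝒢C̄` are isomorphic. -/
theorem cone_lemma (F G : 𝒞 ⥤ 𝒞) [F.Additive] [G.Additive]
    (bar : ∀ {A B : 𝒞}, (A ⟶ B) → (A ⟶ B))
    (hadd : ∀ {A B : 𝒞} (φ ψ : A ⟶ B), bar (φ + ψ) = bar φ + bar ψ)
    (hid : ∀ A : 𝒞, bar (𝟙 A) = 𝟙 A)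
    (hcomp : ∀ {A B D : 𝒞} (φ : A ⟶ B) (ψ : B ⟶ D), bar (φ ≫ ψ) = bar φ ≫ bar ψ)
    (hinvol : ∀ {A B : 𝒞} (φ : A ⟶ B), bar (bar φ) = φ)
    (f : F ⟶ G)
    (del : ∀ {A B : 𝒞}, (A ⟶ B) → (G.obj A ⟶ F.obj B))
    (hdel_sub : ∀ {A B : 𝒞} (φ ψ : A ⟶ B), del (φ - ψ) = del φ - del ψ)
    (hdelG : ∀ {A B : 𝒞} (φ : A ⟶ B), G.map (φ - bar φ) = del φ ≫ f.app B)
    (hdelF : ∀ {A B : 𝒞} (φ : A ⟶ B), F.map (φ - bar φ) = f.app A ≫ del φ)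
    (hLeibniz : ∀ {A B D : 𝒞} (φ : A ⟶ B) (ψ : B ⟶ D),
      del (φ ≫ ψ) = G.map φ ≫ del ψ + del φ ≫ F.map (bar ψ) ∧
      del (φ ≫ ψ) = G.map (bar φ) ≫ del ψ + del φ ≫ F.map ψ)
    (C : CochainComplex 𝒞 ℤ)
    (hbounded : ∃ a b : ℤ, ∀ i : ℤ, i < a ∨ b < i → IsZero (C.X i)) :
    Nonempty
      (CochainComplex.mappingCone
          ((NatTrans.mapHomologicalComplex f (ComplexShape.up ℤ)).app C) ≅
        CochainComplex.mappingCone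
          ((NatTrans.mapHomologicalComplex f (ComplexShape.up ℤ)).app
            (barComplex bar hadd hcomp C))) := by
  classical
  let D := barComplex bar hadd hcomp C
  have hdel0 : ∀ {A B : 𝒞}, del (0 : A ⟶ B) = 0 := by
    intro A B
    simpa using hdel_sub (0 : A ⟶ B) 0
  have hkey : ∀ n : ℤ,
      G.map (C.d n (n + 1)) ≫ del (C.d (n + 1) (n + 1 + 1)) +
        del (C.d n (n + 1)) ≫ F.map (bar (C.d (n + 1) (n + 1 + 1))) = 0 := by
    intro n
    have h := (hLeibniz (C.d n (n + 1)) (C.d (n + 1) (n + 1 + 1))).1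
    rw [C.d_comp_d, hdel0] at h
    exact h.symm
  have hF : ∀ i j : ℤ, f.app (C.X i) ≫ del (C.d i j) =
      F.map (C.d i j) - F.map (bar (C.d i j)) := by
    intro i j
    rw [← hdelF, Functor.map_sub]
  have hG : ∀ i j : ℤ, del (C.d i j) ≫ f.app (C.X j) =
      G.map (C.d i j) - G.map (bar (C.d i j)) := by
    intro i j
    rw [← hdelG, Functor.map_sub]
  refine cone_iso_aux _ _ (fun k => 𝟙 (F.obj (C.X k))) (fun k => 𝟙 (F.obj (C.X k)))
    (fun k => 𝟙 (G.obj (C.X k))) (fun k => 𝟙 (G.obj (C.X k)))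
    (fun k => Category.comp_id _) (fun k => Category.comp_id _)
    (fun k => Category.comp_id _) (fun k => Category.comp_id _)
    (fun k => del (C.d k (k + 1))) ?_ ?_ ?_ ?_
  · intro k
    change F.map (C.d k (k + 1)) ≫ 𝟙 _ =
      𝟙 _ ≫ F.map (bar (C.d k (k + 1))) + f.app (C.X k) ≫ del (C.d k (k + 1))
    rw [Category.comp_id, Category.id_comp, hF]
    abel
  · intro k
    change G.map (C.d k (k + 1)) ≫ del (C.d (k + 1) (k + 1 + 1)) =
      -(del (C.d k (k + 1)) ≫ F.map (bar (C.d (k + 1) (k + 1 + 1))))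
    exact eq_neg_of_add_eq_zero_left (hkey k)
  · intro k
    change f.app (C.X k) ≫ 𝟙 _ = 𝟙 _ ≫ f.app (C.X k)
    rw [Category.comp_id, Category.id_comp]
  · intro k
    change G.map (C.d k (k + 1)) ≫ 𝟙 _ =
      𝟙 _ ≫ G.map (bar (C.d k (k + 1))) + del (C.d k (k + 1)) ≫ f.app (C.X (k + 1))
    rw [Category.comp_id, Category.id_comp, hG]
    abel

end Stmt9
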